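/- arXiv:1404.4466 — 4 statements merged into one kernel-verified Lean document; each statement's English description precedes it below -/
import Mathlib

section
/- Let Σ be a finite alphabet of size b ≥ 1 with numeric representation σ : Σ* → ℕ, and for words u, v ∈ Σ* define the 6×6 integer matrix A(u,v) whose rows are: (b^{2|u|},0,0,0,0,0), (0,b^{|u|+|v|},0,0,0,0), (0,0,b^{2|v|},0,0,0), (σ(u)b^{|u|}, σ(v)b^{|u|}, 0, b^{|u|}, 0, 0), (0, σ(u)b^{|v|}, σ(v)b^{|v|}, 0, b^{|v|}, 0), (σ(u)², 2σ(u)σ(v), σ(v)², 2σ(u), 2σ(v), 1). Then for all words u₁, u₂, v₁, v₂ ∈ Σ*: A(u₁,v₁)·A(u₂,v₂) = A(u₁u₂, v₁v₂). -/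
def numRep {S : Type*} (b : ℕ) (e : S ≃ Fin b) (w : List S) : ℕ :=
  ∑ j : Fin w.length, ((e (w.get j) : ℕ) + 1) * b ^ (w.length - 1 - (j : ℕ))

lemma numRep_cons {S : Type*} (b : ℕ) (e : S ≃ Fin b) (a : S) (w : List S) :
    numRep b e (a :: w) = ((e a : ℕ) + 1) * b ^ w.length + numRep b e w := by
  unfold numRep
  rw [show ∑ j : Fin (a :: w).length, ((e ((a :: w).get j) : ℕ) + 1) * b ^ ((a :: w).length - 1 - (j : ℕ)) = ∑ j : Fin (w.length + 1), ((e ((a :: w).get j) : ℕ) + 1) * b ^ (w.length + 1 - 1 - (j : ℕ)) from rfl, Fin.sum_univ_succ]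
  simp [Nat.sub_sub, Nat.add_comm]

lemma numRep_append {S : Type*} (b : ℕ) (e : S ≃ Fin b) (u v : List S) :
    numRep b e (u ++ v) = numRep b e u * b ^ v.length + numRep b e v := by
  induction u with
  | nil => simp [numRep]
  | cons a u ih =>
      rw [List.cons_append, numRep_cons, numRep_cons, ih, List.length_append]
      ring

/-- The 6×6 integer encoding matrix `A(u,v)` built from the numeric representation `σ`. -/
def encMat {S : Type*} (b : ℕ) (e : S ≃ Fin b) (u v : List S) :
    Matrix (Fin 6) (Fin 6) ℤ :=
  !![(b : ℤ) ^ (2 * u.length), 0, 0, 0, 0, 0;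
     0, (b : ℤ) ^ (u.length + v.length), 0, 0, 0, 0;
     0, 0, (b : ℤ) ^ (2 * v.length), 0, 0, 0;
     (numRep b e u : ℤ) * (b : ℤ) ^ u.length, (numRep b e v : ℤ) * (b : ℤ) ^ u.length, 0,
       (b : ℤ) ^ u.length, 0, 0;
     0, (numRep b e u : ℤ) * (b : ℤ) ^ v.length, (numRep b e v : ℤ) * (b : ℤ) ^ v.length, 0,
       (b : ℤ) ^ v.length, 0;
     (numRep b e u : ℤ) ^ 2, 2 * (numRep b e u : ℤ) * (numRep b e v : ℤ), (numRep b e v : ℤ) ^ 2,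
       2 * (numRep b e u : ℤ), 2 * (numRep b e v : ℤ), 1]

lemma cons_val_five {α : Type*} {m : ℕ} (x : α) (u : Fin (m + 5) → α) :
    Matrix.vecCons x u 5 = Matrix.vecHead (Matrix.vecTail (Matrix.vecTail (Matrix.vecTail (Matrix.vecTail u)))) :=
  rfl

set_option maxHeartbeats 1000000 in
theorem encMat_mul {S : Type*} (b : ℕ) (hb : 1 ≤ b) (e : S ≃ Fin b)
    (u₁ u₂ v₁ v₂ : List S) :
    encMat b e u₁ v₁ * encMat b e u₂ v₂ = encMat b e (u₁ ++ u₂) (v₁ ++ v₂) := by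
  ext i j
  fin_cases i <;> fin_cases j <;>
    simp [encMat, Matrix.mul_apply, Fin.sum_univ_six, numRep_append, List.length_append,
      cons_val_five] <;>
    push_cast <;> ring
end

section
/- (Lemma 1 of the paper.) Let (u_α, v_α)_{α∈[d]} be any instance of the Post correspondence problem over a finite alphabet Σ, and let λ ∈ ℚ be a threshold. Then there exist boundary vectors L, R ∈ ℚ⁶ and matrices A^{(1)}, …, A^{(d)} with nonnegative integer entries, of size 6×6, such that for the induced morphism A : [d]* → ℚ^{6×6} (given by A^{(w)} = A^{(w₁)}⋯A^{(w_{|w|})}) and every word w ∈ [d]*: ⟨L, A^{(w)} R⟩ = −(λ+1) if U(w) = V(w), and ⟨L, A^{(w)} R⟩ ≥ −λ if U(w) ≠ V(w). -/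
open Matrix

section aux
variable {S : Type*} [Fintype S]

/-- injective encoding of a letter into {1, ..., card S}. -/
noncomputable def encV (a : S) : ℕ := ((Fintype.equivFin S) a : ℕ) + 1

/-- little-endian base-(card S + 1) value of a word, with digits `encV`. -/
noncomputable def valV (l : List S) : ℕ :=
  l.foldr (fun a n => encV a + (Fintype.card S + 1) * n) 0

lemma encV_lt (a : S) : encV a < Fintype.card S + 1 := by
  have := ((Fintype.equivFin S) a).isLt; simp only [encV]; omega

lemma encV_pos (a : S) : 1 ≤ encV a := Nat.le_add_left 1 _

lemma valV_nil : valV ([] : List S) = 0 := rfl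

lemma valV_cons (a : S) (l : List S) :
    valV (a :: l) = encV a + (Fintype.card S + 1) * valV l := rfl

lemma valV_append (x l : List S) :
    valV (x ++ l) = valV x + (Fintype.card S + 1) ^ x.length * valV l := by
  induction x with
  | nil => simp [valV_nil]
  | cons a t ih =>
      simp only [List.cons_append, valV_cons, ih, List.length_cons, pow_succ]
      ring

lemma valV_injective : Function.Injective (valV (S := S)) := by
  intro s
  induction s with
  | nil =>
      intro t h
      cases t with
      | nil => rfl
      | cons a t =>
          exfalso
          have := encV_pos a
          rw [valV_nil, valV_cons] at h
          omega
  | cons a s ih =>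
      intro t h
      cases t with
      | nil =>
          exfalso
          have := encV_pos a
          rw [valV_nil, valV_cons] at h
          omega
      | cons c t =>
          rw [valV_cons, valV_cons] at h
          have ha := encV_lt a
          have hc := encV_lt c
          have hmod : encV a = encV c := by
            have h2 := congrArg (· % (Fintype.card S + 1)) h
            simp only [Nat.add_mul_mod_self_left] at h2
            rwa [Nat.mod_eq_of_lt ha, Nat.mod_eq_of_lt hc] at h2
          have hval : valV s = valV t := by
            have : (Fintype.card S + 1) * valV s = (Fintype.card S + 1) * valV t := by
              omega
            exact Nat.eq_of_mul_eq_mul_left (by omega) this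
          have hac : a = c := by
            have : ((Fintype.equivFin S) a : ℕ) = ((Fintype.equivFin S) c : ℕ) := by
              simpa [encV] using hmod
            exact (Fintype.equivFin S).injective (Fin.ext this)
          rw [hac, ih hval]

@[simp] lemma vec6_five {α : Type*} (x : α) (t : Fin 5 → α) :
    Matrix.vecCons x t (5 : Fin 6) = t 4 := rfl

@[simp] lemma vec5_four {α : Type*} (x : α) (t : Fin 4 → α) :
    Matrix.vecCons x t (4 : Fin 5) = t 3 := rfl

@[simp] lemma vec4_three {α : Type*} (x : α) (t : Fin 3 → α) :
    Matrix.vecCons x t (3 : Fin 4) = t 2 := rfl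

@[simp] lemma vec3_two {α : Type*} (x : α) (t : Fin 2 → α) :
    Matrix.vecCons x t (2 : Fin 3) = t 1 := rfl

@[simp] lemma vec2_one {α : Type*} (x : α) (t : Fin 1 → α) :
    Matrix.vecCons x t (1 : Fin 2) = t 0 := rfl

end aux

open Matrix in
/-- Lemma 1 of the paper: for any instance `(u_α, v_α)_{α ∈ [d]}` of the Post
correspondence problem over a finite alphabet `Σ` and any threshold `λ ∈ ℚ`,
there are boundary vectors `L, R ∈ ℚ⁶` and 6×6 matrices `A^{(1)}, …, A^{(d)}` with
nonnegative integer entries such that, for the induced morphism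
`A^{(w)} = A^{(w₁)}⋯A^{(w_n)}` and every word `w ∈ [d]*`,
`⟨L, A^{(w)} R⟩ = −(λ+1)` if `U(w) = V(w)`, and `⟨L, A^{(w)} R⟩ ≥ −λ` if `U(w) ≠ V(w)`. -/
theorem lemma_one {S : Type*} [Fintype S] (d : ℕ) (u v : Fin d → List S) (lam : ℚ) :
    ∃ (L R : Fin 6 → ℚ) (A : Fin d → Matrix (Fin 6) (Fin 6) ℚ),
      (∀ (α : Fin d) (i j : Fin 6), ∃ m : ℕ, A α i j = (m : ℚ)) ∧
      ∀ w : List (Fin d),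
        ((w.map u).flatten = (w.map v).flatten →
          L ⬝ᵥ ((w.map A).prod.mulVec R) = -(lam + 1)) ∧
        ((w.map u).flatten ≠ (w.map v).flatten →
          -lam ≤ L ⬝ᵥ ((w.map A).prod.mulVec R)) := by
  classical
  set b : ℕ := Fintype.card S + 1 with hb
  set N : Fin d → Matrix (Fin 6) (Fin 6) ℕ := fun α =>
    let p := b ^ (u α).length; let q := b ^ (v α).length
    let a := valV (u α); let c := valV (v α)
    !![p^2, 0, 0, 2*p*a, 0, a^2;
       0, p*q, 0, p*c, q*a, a*c;
       0, 0, q^2, 0, 2*q*c, c^2;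
       0, 0, 0, p, 0, a;
       0, 0, 0, 0, q, c;
       0, 0, 0, 0, 0, 1] with hN
  refine ⟨![1, -2, 1, 0, 0, -(lam + 1)], ![0, 0, 0, 0, 0, 1],
    fun α => (N α).map ((↑) : ℕ → ℚ), ?_, ?_⟩
  · intro α i j
    exact ⟨N α i j, rfl⟩
  · have key : ∀ w : List (Fin d),
        ((w.map fun α => (N α).map ((↑) : ℕ → ℚ)).prod).mulVec ![0, 0, 0, 0, 0, 1] =
          ![(valV ((w.map u).flatten) : ℚ)^2,
            (valV ((w.map u).flatten) : ℚ) * (valV ((w.map v).flatten) : ℚ),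
            (valV ((w.map v).flatten) : ℚ)^2,
            (valV ((w.map u).flatten) : ℚ),
            (valV ((w.map v).flatten) : ℚ), 1] := by
      intro w
      induction w with
      | nil =>
          funext i
          fin_cases i <;>
            simp [Matrix.mulVec, dotProduct, Fin.sum_univ_six, valV_nil]
      | cons α w ih =>
          rw [List.map_cons, List.prod_cons, ← Matrix.mulVec_mulVec, ih]
          funext i
          fin_cases i <;>
            simp [Matrix.mulVec, dotProduct, Fin.sum_univ_six, hN, valV_append,
              Matrix.cons_val_zero, Matrix.cons_val_succ, vec6_five, vec5_four, vec4_three, vec3_two, vec2_one]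
          all_goals (simp only [hb]; push_cast; ring)
    intro w
    rw [key w]
    set U : ℚ := (valV ((w.map u).flatten) : ℚ)
    set V : ℚ := (valV ((w.map v).flatten) : ℚ)
    have hdot : (![1, -2, 1, 0, 0, -(lam + 1)] : Fin 6 → ℚ) ⬝ᵥ
        ![U^2, U*V, V^2, U, V, 1] = (U - V)^2 - (lam + 1) := by
      simp [dotProduct, Fin.sum_univ_six, Matrix.cons_val_zero, Matrix.cons_val_succ, vec6_five, vec5_four, vec4_three, vec3_two, vec2_one]
      ring
    rw [hdot]
    constructor
    · intro h
      have : U = V := by simp [U, V, h]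
      rw [this]
      ring
    · intro h
      have hne : valV ((w.map u).flatten) ≠ valV ((w.map v).flatten) :=
        fun hh => h (valV_injective hh)
      have hz : ((valV ((w.map u).flatten) : ℤ) - (valV ((w.map v).flatten) : ℤ)) ≠ 0 := by
        intro hh
        apply hne
        omega
      have h1 : (1 : ℤ) ≤ ((valV ((w.map u).flatten) : ℤ) - (valV ((w.map v).flatten) : ℤ))^2 := by
        rcases lt_or_gt_of_ne hz with h' | h' <;> nlinarith
      have h1q : (1 : ℚ) ≤ (U - V)^2 := by
        have : ((1:ℤ):ℚ) ≤ (((valV ((w.map u).flatten) : ℤ) - (valV ((w.map v).flatten) : ℤ))^2 : ℤ) := by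
          exact_mod_cast h1
        push_cast at this
        simpa [U, V] using this
      linarith
end

section
/- (Lemma 2 of the paper.) Let d, D ≥ 2, let A^{(1)}, …, A^{(d)} ∈ ℚ^{D×D} be matrices (defining the morphism A : [d]* → ℚ^{D×D} by A^{(w)} = A^{(w₁)}⋯A^{(w_{|w|})}), and let L, R ∈ ℚ^D be boundary vectors. Then there exist two matrices B^{(1)}, B^{(2)} ∈ ℚ^{Dd×Dd} (defining the morphism B : [2]* → ℚ^{Dd×Dd}) together with an injective morphism X : [d]* → [2]* satisfying |X(w)| = d·|w| for all w, such that ⟨L̃, B^{(X(w))} R̃⟩ = ⟨L, A^{(w)} R⟩ for all w ∈ [d]*, where L̃, R̃ ∈ ℚ^{Dd} are obtained from L, R by appending zeros. -/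
open Matrix

namespace LemmaTwoAux

variable {d D : ℕ}

/-- Vector supported on block `j`. -/
def embedV (D : ℕ) {d : ℕ} (j : Fin d) (f : Fin D → ℚ) : Fin d × Fin D → ℚ :=
  fun p => if p.1 = j then f p.2 else 0

/-- The two small matrices: `0` is a cyclic block shift, `1` applies `A` at the
current block and shifts. -/
def Bsmall [NeZero d] (A : Fin d → Matrix (Fin D) (Fin D) ℚ) (i : Fin 2) :
    Matrix (Fin d × Fin D) (Fin d × Fin D) ℚ :=
  if i = 0 then Matrix.of fun p q => if q.1 = p.1 + 1 ∧ q.2 = p.2 then 1 else 0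
  else Matrix.of fun p q => if q.1 = p.1 + 1 then A p.1 p.2 q.2 else 0

/-- Code word for letter `a`. -/
def codeW (d : ℕ) (a : Fin d) : List (Fin 2) :=
  List.replicate a.val 0 ++ 1 :: List.replicate (d - 1 - a.val) 0

/-- The morphism. -/
def XW (d : ℕ) : List (Fin d) → List (Fin 2)
  | [] => []
  | a :: w => codeW d a ++ XW d w

lemma XW_append (w₁ w₂ : List (Fin d)) : XW d (w₁ ++ w₂) = XW d w₁ ++ XW d w₂ := by
  induction w₁ with
  | nil => simp [XW]
  | cons a w ih => simp [XW, ih]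

lemma codeW_length (hd : 1 ≤ d) (a : Fin d) : (codeW d a).length = d := by
  have := a.isLt
  simp [codeW]
  omega

lemma XW_length (hd : 1 ≤ d) (w : List (Fin d)) : (XW d w).length = d * w.length := by
  induction w with
  | nil => simp [XW]
  | cons a w ih => simp [XW, codeW_length hd, ih]; ring

lemma rep_aux : ∀ (a b : ℕ) (s t : List (Fin 2)),
    List.replicate a (0 : Fin 2) ++ 1 :: s = List.replicate b 0 ++ 1 :: t →
    a = b ∧ s = t := by
  intro a
  induction a with
  | zero =>
    intro b s t h
    cases b with
    | zero => simpa using h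
    | succ b => simp [List.replicate_succ] at h
  | succ a ih =>
    intro b s t h
    cases b with
    | zero => simp [List.replicate_succ] at h
    | succ b =>
      simp only [List.replicate_succ, List.cons_append, List.cons.injEq] at h
      obtain ⟨ab, st⟩ := ih b s t h.2
      exact ⟨by omega, st⟩

lemma XW_inj : ∀ w₁ w₂ : List (Fin d), XW d w₁ = XW d w₂ → w₁ = w₂ := by
  intro w₁
  induction w₁ with
  | nil =>
    intro w₂ h
    cases w₂ with
    | nil => rfl
    | cons b t => simp [XW, codeW] at h
  | cons a s ih =>
    intro w₂ h
    cases w₂ with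
    | nil => simp [XW, codeW] at h
    | cons b t =>
      simp only [XW, codeW, List.append_assoc, List.cons_append] at h
      obtain ⟨hab, hrest⟩ := rep_aux _ _ _ _ h
      have hab' : a = b := Fin.ext hab
      subst hab'
      have := List.append_cancel_left hrest
      rw [ih t this]

section Calc

variable [NeZero d] (A : Fin d → Matrix (Fin D) (Fin D) ℚ)

open Fin.NatCast

lemma vecMul_shift (j : Fin d) (f : Fin D → ℚ) :
    vecMul (embedV D j f) (Bsmall A 0) = embedV D (j + 1) f := by
  funext q
  show ∑ p : Fin d × Fin D, embedV D j f p * Bsmall A 0 p q = _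
  rw [Finset.sum_eq_single (j, q.2)]
  · by_cases h : q.1 = j + 1 <;> simp [embedV, Bsmall, h]
  · rintro ⟨j', x⟩ _ hp
    by_cases h : j' = j
    · subst h
      have hx : ¬ q.2 = x := fun hq => hp (Prod.ext rfl hq.symm)
      simp [embedV, Bsmall, hx]
    · simp [embedV, h]
  · simp

lemma vecMul_apply (j : Fin d) (f : Fin D → ℚ) :
    vecMul (embedV D j f) (Bsmall A 1) = embedV D (j + 1) (vecMul f (A j)) := by
  funext q
  show ∑ p : Fin d × Fin D, embedV D j f p * Bsmall A 1 p q = _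
  rw [Fintype.sum_prod_type]
  rw [Finset.sum_eq_single j]
  · by_cases h : q.1 = j + 1 <;> simp [embedV, Bsmall, h, vecMul, dotProduct]
  · intro j' _ hj'
    simp [embedV, hj']
  · simp

lemma vecMul_shifts (k : ℕ) (j : Fin d) (f : Fin D → ℚ) :
    vecMul (embedV D j f) ((List.replicate k (0 : Fin 2)).map (Bsmall A)).prod
      = embedV D (j + (k : Fin d)) f := by
  induction k generalizing j with
  | zero => simp [Matrix.vecMul_one]
  | succ k ih =>
    rw [List.replicate_succ, List.map_cons, List.prod_cons, ← Matrix.vecMul_vecMul,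
      vecMul_shift, ih]
    congr 1
    push_cast
    rw [add_assoc, add_comm 1 (k : Fin d)]

lemma vecMul_code (a : Fin d) (f : Fin D → ℚ) :
    vecMul (embedV D (0 : Fin d) f) ((codeW d a).map (Bsmall A)).prod
      = embedV D 0 (vecMul f (A a)) := by
  have hd : 1 ≤ d := Nat.one_le_iff_ne_zero.mpr (NeZero.ne d)
  have hval : ((a.val : Fin d)) = a := Fin.cast_val_eq_self a
  rw [codeW, List.map_append, List.prod_append, List.map_cons, List.prod_cons,
    ← Matrix.vecMul_vecMul, vecMul_shifts, ← Matrix.vecMul_vecMul, zero_add, hval,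
    vecMul_apply, vecMul_shifts]
  have ha := a.isLt
  have key :  a + 1 + ((d - 1 - a.val : ℕ) : Fin d) = 0 := calc
    a + 1 + ((d - 1 - a.val : ℕ) : Fin d)
      = ((a.val : ℕ) : Fin d) + ((1 : ℕ) : Fin d) + ((d - 1 - a.val : ℕ) : Fin d) := by
        rw [hval, Nat.cast_one]
    _ = ((a.val + 1 + (d - 1 - a.val) : ℕ) : Fin d) := by rw [Nat.cast_add, Nat.cast_add]
    _ = 0 := by rw [show a.val + 1 + (d - 1 - a.val) = d by omega, Fin.natCast_self]
  rw [key]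

lemma vecMul_word (w : List (Fin d)) (f : Fin D → ℚ) :
    vecMul (embedV D (0 : Fin d) f) ((XW d w).map (Bsmall A)).prod
      = embedV D 0 (vecMul f ((w.map A).prod)) := by
  induction w generalizing f with
  | nil => simp [XW, Matrix.vecMul_one]
  | cons a w ih =>
    rw [XW, List.map_append, List.prod_append, ← Matrix.vecMul_vecMul, vecMul_code,
      ih, List.map_cons, List.prod_cons, ← Matrix.vecMul_vecMul]

end Calc

end LemmaTwoAux

open LemmaTwoAux in
open Matrix in
/-- Lemma 2 of the paper: given `d, D ≥ 2`, matrices `A^{(1)}, …, A^{(d)} ∈ ℚ^{D×D}`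
and boundary vectors `L, R ∈ ℚ^D`, there exist two matrices `B^{(1)}, B^{(2)} ∈ ℚ^{Dd×Dd}`
and an injective morphism `X : [d]* → [2]*` with `|X(w)| = d·|w|` such that
`⟨L̃, B^{(X(w))} R̃⟩ = ⟨L, A^{(w)} R⟩` for all `w ∈ [d]*`, where `L̃, R̃ ∈ ℚ^{Dd}`
are `L, R` extended by zeros. -/
theorem lemma_two {d D : ℕ} (hd : 2 ≤ d) (hD : 2 ≤ D)
    (A : Fin d → Matrix (Fin D) (Fin D) ℚ) (L R : Fin D → ℚ) :
    ∃ (B : Fin 2 → Matrix (Fin (D * d)) (Fin (D * d)) ℚ)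
      (X : List (Fin d) → List (Fin 2)),
      X [] = [] ∧
      (∀ w₁ w₂ : List (Fin d), X (w₁ ++ w₂) = X w₁ ++ X w₂) ∧
      Function.Injective X ∧
      (∀ w : List (Fin d), (X w).length = d * w.length) ∧
      (∀ w : List (Fin d),
        (fun k : Fin (D * d) => if h : (k : ℕ) < D then L ⟨k, h⟩ else 0) ⬝ᵥ
            (((X w).map B).prod.mulVec
              (fun k : Fin (D * d) => if h : (k : ℕ) < D then R ⟨k, h⟩ else 0))
          = L ⬝ᵥ ((w.map A).prod.mulVec R)) := by
  haveI : NeZero d := ⟨by omega⟩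
  set e : (Fin d × Fin D) ≃ Fin (D * d) :=
    finProdFinEquiv.trans (finCongr (mul_comm d D)) with he
  refine ⟨fun i => (Matrix.reindexAlgEquiv ℚ ℚ e) (Bsmall A i), XW d, rfl,
    XW_append, XW_inj, XW_length (by omega), ?_⟩
  intro w
  set Lt : Fin (D * d) → ℚ :=
    fun k => if h : (k : ℕ) < D then L ⟨k, h⟩ else 0 with hLt
  set Rt : Fin (D * d) → ℚ :=
    fun k => if h : (k : ℕ) < D then R ⟨k, h⟩ else 0 with hRt
  have he_val : ∀ (j : Fin d) (x : Fin D),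
      ((e (j, x) : Fin (D * d)) : ℕ) = x.val + D * j.val := by
    intro j x
    simp [he, finProdFinEquiv]
  have hkey : ∀ V : Fin D → ℚ,
      (fun p => (fun k : Fin (D * d) => if h : (k : ℕ) < D then V ⟨k, h⟩ else 0) (e p))
        = embedV D (0 : Fin d) V := by
    intro V
    funext p
    rcases p with ⟨j, x⟩
    have hv := he_val j x
    simp only [embedV]
    by_cases hj : j = 0
    · subst hj
      have h1 : ((e (0, x) : Fin (D * d)) : ℕ) < D := by rw [hv]; simpa using x.isLt
      rw [dif_pos h1, if_pos rfl]
      exact congrArg V (Fin.ext (by simp [hv]))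
    · have hj1 : 1 ≤ j.val := Nat.one_le_iff_ne_zero.mpr (fun h => hj (Fin.ext h))
      have h2 : D ≤ x.val + D * j.val := by nlinarith
      rw [dif_neg (by rw [hv]; omega), if_neg hj]
  have hLe : (fun p => Lt (e p)) = embedV D (0 : Fin d) L := hkey L
  have hRe : (fun p => Rt (e p)) = embedV D (0 : Fin d) R := hkey R
  -- rewrite the big product as a reindexing of the small product
  have hprod : ((XW d w).map fun i => (Matrix.reindexAlgEquiv ℚ ℚ e) (Bsmall A i)).prod
      = (Matrix.reindexAlgEquiv ℚ ℚ e) (((XW d w).map (Bsmall A)).prod) := by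
    rw [show ((XW d w).map fun i => (Matrix.reindexAlgEquiv ℚ ℚ e) (Bsmall A i))
        = ((XW d w).map (Bsmall A)).map ⇑(Matrix.reindexAlgEquiv ℚ ℚ e) from
        List.map_map.symm, ← map_list_prod]
  rw [hprod]
  set M : Matrix (Fin d × Fin D) (Fin d × Fin D) ℚ := ((XW d w).map (Bsmall A)).prod with hM
  have hre : (Matrix.reindexAlgEquiv ℚ ℚ e) M = M.submatrix ⇑e.symm ⇑e.symm := by
    simp [Matrix.reindexAlgEquiv_apply, Matrix.reindex_apply]
  rw [hre, Matrix.submatrix_mulVec_equiv M Rt ⇑e.symm e.symm]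
  have hRsymm : Rt ∘ ⇑e.symm.symm = fun p => Rt (e p) := rfl
  rw [hRsymm, hRe]
  -- move the dot product along the equivalence
  have hdot1 : Lt ⬝ᵥ ((M.mulVec (embedV D 0 R)) ∘ ⇑e.symm)
      = (fun p => Lt (e p)) ⬝ᵥ (M.mulVec (embedV D 0 R)) := by
    simp only [dotProduct, Function.comp]
    exact (Fintype.sum_equiv e (fun p => Lt (e p) * M.mulVec (embedV D 0 R) p)
      (fun k => Lt k * M.mulVec (embedV D 0 R) (e.symm k)) (fun p => by simp)).symm
  rw [hdot1, hLe, Matrix.dotProduct_mulVec, vecMul_word]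
  have hdot2 : embedV D (0 : Fin d) (vecMul L ((w.map A).prod)) ⬝ᵥ embedV D 0 R
      = vecMul L ((w.map A).prod) ⬝ᵥ R := by
    simp only [dotProduct, Fintype.sum_prod_type, embedV]
    rw [Finset.sum_eq_single (0 : Fin d)]
    · simp
    · intro j _ hj; simp [hj]
    · simp
  rw [hdot2, ← Matrix.dotProduct_mulVec]
end

section
/- Let d ≥ 1, n ≥ 2, D ≥ 1, and let P : [d]^n → ℝ be a tensor such that for every cut position k with 1 ≤ k ≤ n−1, the d^k × d^{n−k} matricization F^{(k)} with entries F^{(k)}_{(α₁,…,α_k),(α_{k+1},…,α_n)} := P(α₁,…,α_n) has rank at most D. Then there exist matrices M_t^{(α)} ∈ ℝ^{D×D} for t = 2,…,n−1 and α ∈ [d], row vectors L^{(α)} ∈ ℝ^{1×D} and column vectors R^{(α)} ∈ ℝ^{D×1} for α ∈ [d], such that P(α₁,…,α_n) = L^{(α₁)} · M_2^{(α₂)} ⋯ M_{n−1}^{(α_{n−1})} · R^{(α_n)} for all (α₁,…,α_n) ∈ [d]^n. -/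
/-- Glue a word of length `k` and a word of length `n − k` into a word of
length `n` (for `k ≤ n`). -/
def glueWords {d n k : ℕ} (hk : k ≤ n) (a : Fin k → Fin d) (c : Fin (n - k) → Fin d) :
    Fin n → Fin d :=
  fun i => Fin.append a c (Fin.cast (by omega) i)

section TTaux

open Matrix

lemma append_apply_lt {X : Type*} {k l : ℕ} (a : Fin k → X) (c : Fin l → X)
    (j : Fin (k + l)) (hj : (j : ℕ) < k) : Fin.append a c j = a ⟨j, hj⟩ := by
  have h : j = Fin.castAdd l ⟨j, hj⟩ := by ext; rfl
  conv_lhs => rw [h]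
  exact Fin.append_left a c _

lemma append_apply_ge {X : Type*} {k l : ℕ} (a : Fin k → X) (c : Fin l → X)
    (j : Fin (k + l)) (hj : k ≤ (j : ℕ)) :
    Fin.append a c j = c ⟨(j : ℕ) - k, by omega⟩ := by
  have h : j = Fin.natAdd k ⟨(j : ℕ) - k, by omega⟩ := by ext; simp; omega
  conv_lhs => rw [h]
  exact Fin.append_right a c _

lemma glueWords_lt {d n k : ℕ} (hk : k ≤ n) (a : Fin k → Fin d) (c : Fin (n - k) → Fin d)
    (i : Fin n) (hi : (i : ℕ) < k) : glueWords hk a c i = a ⟨i, hi⟩ := by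
  unfold glueWords
  exact append_apply_lt a c _ hi

lemma glueWords_ge {d n k : ℕ} (hk : k ≤ n) (a : Fin k → Fin d) (c : Fin (n - k) → Fin d)
    (i : Fin n) (hi : k ≤ (i : ℕ)) :
    glueWords hk a c i = c ⟨(i : ℕ) - k, by omega⟩ := by
  unfold glueWords
  exact append_apply_ge a c _ hi

/-- Prepend a letter to the tail word (with the needed cast). -/
def consW {d n k : ℕ} (h : k + 1 ≤ n) (α : Fin d) (c : Fin (n - (k + 1)) → Fin d) :
    Fin (n - k) → Fin d :=
  fun j => (Fin.cons α c : Fin (n - (k + 1) + 1) → Fin d)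
    (Fin.cast (show n - k = n - (k + 1) + 1 by omega) j)

lemma glueWords_snoc {d n k : ℕ} (h : k + 1 ≤ n) (a : Fin k → Fin d) (α : Fin d)
    (c : Fin (n - (k + 1)) → Fin d) :
    glueWords h (Fin.snoc a α) c = glueWords (by omega) a (consW h α c) := by
  funext i
  rcases Nat.lt_or_ge (i : ℕ) k with hik | hik
  · rw [glueWords_lt h (Fin.snoc a α) c i (by omega),
      glueWords_lt (show k ≤ n by omega) a (consW h α c) i hik]
    have : (⟨(i : ℕ), by omega⟩ : Fin (k + 1)) = Fin.castSucc ⟨(i : ℕ), hik⟩ := by ext; rfl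
    rw [this, Fin.snoc_castSucc]
  · rw [glueWords_ge (show k ≤ n by omega) a (consW h α c) i hik]
    show _ = (Fin.cons α c : Fin (n - (k + 1) + 1) → Fin d)
      (Fin.cast (show n - k = n - (k + 1) + 1 by omega)
        (⟨(i : ℕ) - k, by omega⟩ : Fin (n - k)))
    rcases Nat.eq_or_lt_of_le hik with heq | hgt
    · rw [glueWords_lt h (Fin.snoc a α) c i (by omega)]
      have h1 : (⟨(i : ℕ), by omega⟩ : Fin (k + 1)) = Fin.last k := by ext; simp [← heq]
      rw [h1, Fin.snoc_last]
      have h2 : Fin.cast (show n - k = n - (k + 1) + 1 by omega)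
          (⟨(i : ℕ) - k, by omega⟩ : Fin (n - k)) = 0 := by
        ext; simp; omega
      rw [h2, Fin.cons_zero]
    · rw [glueWords_ge h (Fin.snoc a α) c i (by omega)]
      have h2 : Fin.cast (show n - k = n - (k + 1) + 1 by omega)
          (⟨(i : ℕ) - k, by omega⟩ : Fin (n - k))
          = Fin.succ ⟨(i : ℕ) - (k + 1), by omega⟩ := by ext; simp; omega
      rw [h2, Fin.cons_succ]

/-- The row function of the matricization at cut `k`. -/
def rowF {d n : ℕ} (P : (Fin n → Fin d) → ℝ) (k : ℕ) (hk : k ≤ n) :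
    (Fin k → Fin d) → (Fin (n - k) → Fin d) → ℝ :=
  fun a c => P (glueWords hk a c)

lemma exists_spanning {V : Type*} [AddCommGroup V] [Module ℝ V] [FiniteDimensional ℝ V]
    {D : ℕ} (S : Submodule ℝ V) (h : Module.finrank ℝ S ≤ D) :
    ∃ v : Fin D → V, Submodule.span ℝ (Set.range v) = S := by
  classical
  let b := Module.finBasis ℝ S
  refine ⟨fun β => if hb : (β : ℕ) < Module.finrank ℝ S then (b ⟨β, hb⟩ : V) else 0, ?_⟩
  apply le_antisymm
  · rw [Submodule.span_le]
    rintro x ⟨β, rfl⟩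
    dsimp only
    split
    · exact (b _).2
    · exact S.zero_mem
  · have hS : Submodule.span ℝ (Set.range (fun i => ((b i : V)))) = S := by
      rw [show (fun i => ((b i : V))) = S.subtype ∘ b from rfl, Set.range_comp,
        Submodule.span_image, b.span_eq, Submodule.map_subtype_top]
    calc S = Submodule.span ℝ (Set.range (fun i => ((b i : V)))) := hS.symm
      _ ≤ _ := by
        apply Submodule.span_mono
        rintro x ⟨i, rfl⟩
        exact ⟨⟨(i : ℕ), lt_of_lt_of_le i.isLt h⟩, by simp [i.isLt]⟩

/-- Partial products of a list of matrices. -/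
def Qprod {D m : ℕ} (Ms : Fin m → Matrix (Fin D) (Fin D) ℝ) (t : ℕ) :
    Matrix (Fin D) (Fin D) ℝ :=
  ((((List.finRange m).map Ms)).take t).prod

lemma Qprod_zero {D m : ℕ} (Ms : Fin m → Matrix (Fin D) (Fin D) ℝ) : Qprod Ms 0 = 1 := rfl

lemma Qprod_succ {D m : ℕ} (Ms : Fin m → Matrix (Fin D) (Fin D) ℝ) {t : ℕ} (ht : t < m) :
    Qprod Ms (t + 1) = Qprod Ms t * Ms ⟨t, ht⟩ := by
  unfold Qprod
  rw [List.take_succ]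
  have hlen : t < ((List.finRange m).map Ms).length := by simp [ht]
  rw [List.getElem?_eq_getElem hlen, List.getElem_map, List.getElem_finRange]
  simp [Fin.cast]

lemma Qprod_top {D m : ℕ} (Ms : Fin m → Matrix (Fin D) (Fin D) ℝ) {t : ℕ} (ht : m ≤ t) :
    Qprod Ms t = ((List.finRange m).map Ms).prod := by
  unfold Qprod
  rw [List.take_of_length_le (by simpa using ht)]

end TTaux

open Matrix in
/-- Any tensor `P : [d]^n → ℝ` whose matricizations at every cut `k` (for
`1 ≤ k ≤ n−1`) have rank at most `D` admits a (not necessarily positive)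
matrix-product / quasi-realization representation with bond dimension `D`:
`P(α₁,…,α_n) = L^{(α₁)} · M₂^{(α₂)} ⋯ M_{n−1}^{(α_{n−1})} · R^{(α_n)}`. -/
theorem tensor_train_of_rank_le {d D n : ℕ} (hd : 1 ≤ d) (hD : 1 ≤ D) (hn : 2 ≤ n)
    (P : (Fin n → Fin d) → ℝ)
    (hrank : ∀ k : ℕ, 1 ≤ k → k ≤ n - 1 →
      ∀ hk : k ≤ n,
        Matrix.rank
            (Matrix.of fun (a : Fin k → Fin d) (c : Fin (n - k) → Fin d) =>
              P (glueWords hk a c))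
          ≤ D) :
    ∃ (L : Fin d → Fin D → ℝ) (M : Fin (n - 2) → Fin d → Matrix (Fin D) (Fin D) ℝ)
      (R : Fin d → Fin D → ℝ),
      ∀ a : Fin n → Fin d,
        P a = L (a ⟨0, by omega⟩) ⬝ᵥ
          ((((List.finRange (n - 2)).map
              (fun t => M t (a ⟨(t : ℕ) + 1, by have := t.isLt; omega⟩))).prod).mulVec
            (R (a ⟨n - 1, by omega⟩))) := by
  classical
  have hsub1 : n - 1 ≤ n := Nat.sub_le n 1
  have hn1 : 1 ≤ n - 1 := by omega
  have h1n : 1 ≤ n := by omega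
  have hsub21 : n - 2 ≤ n - 1 := by omega
  have h21 : n - 2 + 1 = n - 1 := by omega
  have h21n : n - 2 + 1 ≤ n := by omega
  -- the row spaces have dimension ≤ D
  have hfin : ∀ k (h1 : 1 ≤ k) (h2 : k ≤ n - 1),
      Module.finrank ℝ (Submodule.span ℝ
        (Set.range (rowF P k (h2.trans hsub1)))) ≤ D := by
    intro k h1 h2
    have e := Matrix.rank_eq_finrank_span_row
      (Matrix.of (rowF P k (h2.trans hsub1)))
    calc Module.finrank ℝ (Submodule.span ℝ (Set.range (rowF P k (h2.trans hsub1))))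
        = (Matrix.of (rowF P k (h2.trans hsub1))).rank := e.symm
      _ ≤ D := hrank k h1 h2 (h2.trans hsub1)
  -- choose spanning families for the row spaces
  have key : ∀ k (h1 : 1 ≤ k) (h2 : k ≤ n - 1),
      ∃ v : Fin D → ((Fin (n - k) → Fin d) → ℝ),
        Submodule.span ℝ (Set.range v)
          = Submodule.span ℝ (Set.range (rowF P k (h2.trans hsub1))) :=
    fun k h1 h2 => exists_spanning _ (hfin k h1 h2)
  choose H hH using key
  -- boundary vector L
  have hLex : ∀ α : Fin d, ∃ Lα : Fin D → ℝ,
      ∑ β, Lα β • H 1 le_rfl hn1 β = rowF P 1 h1n (fun _ => α) := by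
    intro α
    rw [← Submodule.mem_span_range_iff_exists_fun ℝ, hH 1 le_rfl hn1]
    exact Submodule.subset_span ⟨_, rfl⟩
  choose L hL using hLex
  -- transition matrices
  have hMex : ∀ k (h1 : 1 ≤ k) (h2 : k + 1 ≤ n - 1), ∀ α : Fin d, ∀ β : Fin D,
      ∃ w : Fin D → ℝ,
        ∑ γ, w γ • H (k + 1) (Nat.le_add_left 1 k) h2 γ
          = fun c => H k h1 (Nat.le_of_succ_le h2) β (consW (h2.trans hsub1) α c) := by
    intro k h1 h2 α β
    rw [← Submodule.mem_span_range_iff_exists_fun ℝ, hH (k + 1) (Nat.le_add_left 1 k) h2]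
    have hmem : H k h1 (Nat.le_of_succ_le h2) β
        ∈ Submodule.span ℝ (Set.range (rowF P k ((Nat.le_of_succ_le h2).trans hsub1))) := by
      rw [← hH k h1 (Nat.le_of_succ_le h2)]
      exact Submodule.subset_span ⟨β, rfl⟩
    have hmap : Submodule.map (LinearMap.funLeft ℝ ℝ (consW (h2.trans hsub1) α))
        (Submodule.span ℝ (Set.range (rowF P k ((Nat.le_of_succ_le h2).trans hsub1))))
        ≤ Submodule.span ℝ (Set.range (rowF P (k + 1) (h2.trans hsub1))) := by
      rw [Submodule.map_span, Submodule.span_le]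
      rintro x ⟨y, ⟨aw, rfl⟩, rfl⟩
      have heq : LinearMap.funLeft ℝ ℝ (consW (h2.trans hsub1) α)
            (rowF P k ((Nat.le_of_succ_le h2).trans hsub1) aw)
          = rowF P (k + 1) (h2.trans hsub1) (Fin.snoc aw α) := by
        funext c
        show rowF P k _ aw (consW _ α c) = _
        unfold rowF
        rw [glueWords_snoc (h2.trans hsub1) aw α c]
      rw [heq]
      exact Submodule.subset_span ⟨_, rfl⟩
    exact hmap ⟨_, hmem, rfl⟩
  -- package into the M matrices
  have hMex' : ∀ (t : Fin (n - 2)) (α : Fin d),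
      ∃ Mt : Matrix (Fin D) (Fin D) ℝ, ∀ β,
        ∑ γ, Mt β γ • H ((t : ℕ) + 1 + 1) (Nat.le_add_left 1 _)
            (le_trans (Nat.succ_le_succ (Nat.succ_le_of_lt t.isLt)) (le_of_eq h21)) γ
          = fun c => H ((t : ℕ) + 1) (Nat.le_add_left 1 _)
              (le_trans (Nat.succ_le_of_lt t.isLt) hsub21) β
              (consW (le_trans (Nat.succ_le_succ (Nat.succ_le_of_lt t.isLt)) h21n) α c) := by
    intro t α
    choose w hw using hMex ((t : ℕ) + 1) (Nat.le_add_left 1 _)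
      (le_trans (Nat.succ_le_succ (Nat.succ_le_of_lt t.isLt)) (le_of_eq h21)) α
    exact ⟨Matrix.of w, hw⟩
  choose M hM using hMex'
  -- boundary vector R
  refine ⟨L, M, fun α β => H (n - 1) hn1 le_rfl β (fun _ => α), ?_⟩
  intro a
  set Ms : Fin (n - 2) → Matrix (Fin D) (Fin D) ℝ :=
    fun t => M t (a ⟨(t : ℕ) + 1, by have := t.isLt; omega⟩) with hMs
  -- main induction on the cut position
  have main : ∀ k (h1 : 1 ≤ k) (h2 : k ≤ n - 1), ∀ c : Fin (n - k) → Fin d,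
      rowF P k (h2.trans hsub1) (fun i : Fin k => a (Fin.castLE (h2.trans hsub1) i)) c
        = ∑ β, Matrix.vecMul (L (a ⟨0, by omega⟩)) (Qprod Ms (k - 1)) β
            * H k h1 h2 β c := by
    intro k
    induction k with
    | zero => omega
    | succ k ih =>
      intro h1 h2 c
      rcases Nat.eq_zero_or_pos k with rfl | hk1
      · -- base case : k = 1
        have hpre : (fun i : Fin 1 => a (Fin.castLE (h2.trans hsub1) i))
            = (fun _ : Fin 1 => a (Fin.castLE (h2.trans hsub1) (0 : Fin 1))) := by
          funext i
          rw [Subsingleton.elim i 0]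
        rw [hpre]
        have hth := congrFun (hL (a (Fin.castLE (h2.trans hsub1) (0 : Fin 1)))) c
        simp only [Finset.sum_apply, Pi.smul_apply, smul_eq_mul] at hth
        rw [show rowF P 1 (h2.trans hsub1)
              (fun _ : Fin 1 => a (Fin.castLE (h2.trans hsub1) (0 : Fin 1))) c
            = ∑ β, L (a (Fin.castLE (h2.trans hsub1) (0 : Fin 1))) β
              * H 1 le_rfl hn1 β c from hth.symm]
        have h0 : a (Fin.castLE (h2.trans hsub1) (0 : Fin 1)) = a ⟨0, by omega⟩ := rfl
        rw [h0]
        apply Finset.sum_congr rfl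
        intro β _
        rw [show Qprod Ms (1 - 1) = 1 from rfl, Matrix.vecMul_one]
      · -- inductive step
        obtain ⟨k', rfl⟩ : ∃ k', k = k' + 1 := ⟨k - 1, by omega⟩
        set α := a ⟨k' + 1, by omega⟩ with hα
        have hpre : (fun i : Fin (k' + 1 + 1) => a (Fin.castLE (h2.trans hsub1) i))
            = Fin.snoc (fun i : Fin (k' + 1) =>
                a (Fin.castLE (show k' + 1 ≤ n by omega) i)) α := by
          funext i
          rcases Nat.lt_or_ge (i : ℕ) (k' + 1) with hik | hik
          · have hi : i = Fin.castSucc ⟨(i : ℕ), hik⟩ := by ext; rfl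
            rw [hi, Fin.snoc_castSucc]
            rfl
          · have hi : i = Fin.last (k' + 1) := by
              ext
              rw [Fin.val_last]
              omega
            rw [hi, Fin.snoc_last]
            rfl
        rw [hpre]
        have hstep : rowF P (k' + 1 + 1) (h2.trans hsub1)
            (Fin.snoc (fun i : Fin (k' + 1) =>
              a (Fin.castLE (show k' + 1 ≤ n by omega) i)) α) c
            = rowF P (k' + 1) (show k' + 1 ≤ n by omega)
                (fun i : Fin (k' + 1) => a (Fin.castLE (show k' + 1 ≤ n by omega) i))
                (consW (h2.trans hsub1) α c) := by
          unfold rowF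
          rw [glueWords_snoc (h2.trans hsub1) _ α c]
        rw [hstep]
        have hrw := ih (by omega) (by omega) (consW (h2.trans hsub1) α c)
        rw [show rowF P (k' + 1) (show k' + 1 ≤ n by omega)
              (fun i : Fin (k' + 1) => a (Fin.castLE (show k' + 1 ≤ n by omega) i))
              (consW (h2.trans hsub1) α c)
            = ∑ β, Matrix.vecMul (L (a ⟨0, by omega⟩)) (Qprod Ms (k' + 1 - 1)) β
              * H (k' + 1) (by omega) (by omega) β (consW (h2.trans hsub1) α c) from hrw]
        have htr : ∀ β, H (k' + 1) (by omega : 1 ≤ k' + 1) (by omega : k' + 1 ≤ n - 1) β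
              (consW (h2.trans hsub1) α c)
            = ∑ γ, M ⟨k', by omega⟩ α β γ * H (k' + 1 + 1) h1 h2 γ c := by
          intro β
          have hth := congrFun (hM ⟨k', by omega⟩ α β) c
          simp only [Finset.sum_apply, Pi.smul_apply, smul_eq_mul] at hth
          exact hth.symm
        calc ∑ β, Matrix.vecMul (L (a ⟨0, by omega⟩)) (Qprod Ms (k' + 1 - 1)) β
              * H (k' + 1) (by omega) (by omega) β (consW (h2.trans hsub1) α c)
            = ∑ β, Matrix.vecMul (L (a ⟨0, by omega⟩)) (Qprod Ms k') β
              * ∑ γ, M ⟨k', by omega⟩ α β γ * H (k' + 1 + 1) h1 h2 γ c := by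
              apply Finset.sum_congr rfl
              intro β _
              rw [htr β]
              rfl
          _ = ∑ γ, (∑ β, Matrix.vecMul (L (a ⟨0, by omega⟩)) (Qprod Ms k') β
              * M ⟨k', by omega⟩ α β γ) * H (k' + 1 + 1) h1 h2 γ c := by
              simp only [Finset.mul_sum]
              rw [Finset.sum_comm]
              simp only [Finset.sum_mul, mul_assoc]
          _ = ∑ γ, Matrix.vecMul (L (a ⟨0, by omega⟩)) (Qprod Ms (k' + 1 + 1 - 1)) γ
              * H (k' + 1 + 1) h1 h2 γ c := by
              apply Finset.sum_congr rfl
              intro γ _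
              congr 1
              rw [show Qprod Ms (k' + 1 + 1 - 1) = Qprod Ms (k' + 1) from rfl,
                Qprod_succ Ms (show k' < n - 2 by omega), ← Matrix.vecMul_vecMul]
              simp [Matrix.vecMul, dotProduct, hMs, hα]
  -- conclude at the full cut k = n - 1
  have hfull := main (n - 1) hn1 le_rfl (fun _ => a ⟨n - 1, by omega⟩)
  have hglue : glueWords (le_rfl.trans hsub1 : n - 1 ≤ n)
      (fun i : Fin (n - 1) => a (Fin.castLE (le_rfl.trans hsub1) i))
      (fun _ => a ⟨n - 1, by omega⟩) = a := by
    funext i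
    rcases Nat.lt_or_ge (i : ℕ) (n - 1) with hik | hik
    · rw [glueWords_lt _ _ _ i hik]
      congr 1
    · rw [glueWords_ge _ _ _ i hik]
      congr 1
      ext
      simp
      omega
  have hP : P a = rowF P (n - 1) (le_rfl.trans hsub1)
      (fun i : Fin (n - 1) => a (Fin.castLE (le_rfl.trans hsub1) i))
      (fun _ => a ⟨n - 1, by omega⟩) := by
    unfold rowF
    rw [hglue]
  rw [hP, hfull, Matrix.dotProduct_mulVec]
  rw [show ((List.finRange (n - 2)).map
      (fun t => M t (a ⟨(t : ℕ) + 1, by have := t.isLt; omega⟩))).prod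
      = Qprod Ms (n - 1 - 1) from (Qprod_top Ms (by omega)).symm]
  simp [dotProduct]
end
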